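/- Let S ⊂ 𝔽_q^1[X] have growth density with exponent α ≥ 1, enumerated without repetition as S = {A_n : n ∈ ℕ} with deg A_1 ≤ deg A_2 ≤ ⋯, and let S_* ⊂ S satisfy 1/(2μ(T)) ≤ #{1 ≤ n ≤ T : A_n ∈ S_*}/T ≤ 3/μ(T) for all sufficiently large T. Then there exist a natural number t ≥ 3 and constants c₀ > 0 and ρ > 0 such that for all integers n ≥ 1, #𝒞_n ≥ c₀ q^{(2n+1)^t/α} / n^ρ, where 𝒞_n = {A ∈ S_* : (2n)^t ≤ deg A < (2n+1)^t}. -/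

import Mathlib

open scoped ENNReal
open Filter
open scoped Classical

noncomputable section

namespace LaurentCF

/-! We model the field `𝔽_q((X⁻¹))` of formal Laurent series in `X⁻¹` by
`LaurentSeries Fq = HahnSeries ℤ Fq`, where the Hahn-series variable plays the
role of `X⁻¹`: the coefficient at `i : ℤ` is the coefficient `c_i` of `X^{-i}`. -/

variable (Fq : Type) [Field Fq] [Fintype Fq]

/-- `deg x = - inf {n : ℤ | c_n ≠ 0}` (with junk value `0` at `x = 0`). -/
def lsDeg (x : LaurentSeries Fq) : ℤ := -(HahnSeries.order x)

/-- The absolute value `‖x‖_q = q ^ (deg x)`, `‖0‖_q = 0`. -/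
def qnorm (x : LaurentSeries Fq) : ℝ :=
  if x = 0 then 0 else (Fintype.card Fq : ℝ) ^ (lsDeg Fq x)

variable {Fq}

lemma one_lt_cardR : (1 : ℝ) < (Fintype.card Fq : ℝ) := by
  exact_mod_cast Fintype.one_lt_card

lemma qnorm_nonneg (x : LaurentSeries Fq) : 0 ≤ qnorm Fq x := by
  unfold qnorm
  split
  · exact le_refl 0
  · exact zpow_nonneg (by positivity) _

lemma qnorm_zero : qnorm Fq (0 : LaurentSeries Fq) = 0 := by simp [qnorm]

lemma qnorm_pos {x : LaurentSeries Fq} (hx : x ≠ 0) : 0 < qnorm Fq x := by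
  unfold qnorm
  rw [if_neg hx]
  exact zpow_pos (lt_trans one_pos one_lt_cardR) _

lemma qnorm_neg (x : LaurentSeries Fq) : qnorm Fq (-x) = qnorm Fq x := by
  unfold qnorm lsDeg
  rw [HahnSeries.order_neg, neg_eq_zero]

lemma qnorm_add_le (x y : LaurentSeries Fq) :
    qnorm Fq (x + y) ≤ max (qnorm Fq x) (qnorm Fq y) := by
  by_cases hxy : x + y = 0
  · rw [hxy, qnorm_zero]
    exact le_max_of_le_left (qnorm_nonneg x)
  by_cases hx : x = 0
  · simp [hx, le_max_of_le_right (le_refl (qnorm Fq y))]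
  by_cases hy : y = 0
  · simp [hy, le_max_of_le_left (le_refl (qnorm Fq x))]
  have hmin : min (HahnSeries.order x) (HahnSeries.order y) ≤ HahnSeries.order (x + y) :=
    HahnSeries.min_order_le_order_add hxy
  have hdeg : lsDeg Fq (x + y) ≤ max (lsDeg Fq x) (lsDeg Fq y) := by
    unfold lsDeg
    rw [min_le_iff] at hmin
    rw [le_max_iff]
    omega
  have h1 : (1 : ℝ) ≤ (Fintype.card Fq : ℝ) := le_of_lt one_lt_cardR
  unfold qnorm
  rw [if_neg hxy, if_neg hx, if_neg hy]
  rcases le_total (lsDeg Fq x) (lsDeg Fq y) with h | h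
  · refine le_max_of_le_right ?_
    exact zpow_le_zpow_right₀ h1 (by rw [max_eq_right h] at hdeg; exact hdeg)
  · refine le_max_of_le_left ?_
    exact zpow_le_zpow_right₀ h1 (by rw [max_eq_left h] at hdeg; exact hdeg)

variable (Fq) in
/-- The open unit disc `Δ = {x : ‖x‖_q < 1}`. -/
structure Delta : Type where
  val : LaurentSeries Fq
  norm_lt : qnorm Fq val < 1

lemma Delta.ext' {x y : Delta Fq} (h : x.val = y.val) : x = y := by
  cases x; cases y; simpa using h

instance : EMetricSpace (Delta Fq) where
  edist x y := ENNReal.ofReal (qnorm Fq (x.val - y.val))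
  edist_self x := by simp [qnorm]
  edist_comm x y := by
    show ENNReal.ofReal _ = ENNReal.ofReal _
    rw [show x.val - y.val = -(y.val - x.val) by ring, qnorm_neg]
  edist_triangle x y z := by
    show ENNReal.ofReal _ ≤ ENNReal.ofReal _ + ENNReal.ofReal _
    have h := qnorm_add_le (x.val - y.val) (y.val - z.val)
    rw [sub_add_sub_cancel] at h
    refine le_trans (ENNReal.ofReal_le_ofReal h) ?_
    rcases max_cases (qnorm Fq (x.val - y.val)) (qnorm Fq (y.val - z.val)) with ⟨heq, _⟩ | ⟨heq, _⟩ <;>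
      rw [heq]
    · exact le_self_add
    · exact le_add_self
  eq_of_edist_eq_zero := by
    intro x y h
    have h : ENNReal.ofReal (qnorm Fq (x.val - y.val)) = 0 := h
    rw [ENNReal.ofReal_eq_zero] at h
    by_contra hne
    have : x.val - y.val ≠ 0 := fun hc => hne (Delta.ext' (sub_eq_zero.mp hc))
    exact absurd h (not_le.mpr (qnorm_pos this))

instance : MeasurableSpace (Delta Fq) := borel _
instance : BorelSpace (Delta Fq) := ⟨rfl⟩

variable (Fq)

/-- The integral part `[x] = ∑_{i ≤ 0} c_i X^{-i}`. -/
def intPart (x : LaurentSeries Fq) : LaurentSeries Fq :=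
  ⟨fun i => if i ≤ 0 then x.coeff i else 0, x.isPWO_support'.mono (by
    intro i hi
    simp only [Function.mem_support, ne_eq] at hi ⊢
    intro h
    apply hi
    split <;> simp [h])⟩

/-- The Gauss-type map `T(x) = 1/x - [1/x]`, `T(0) = 0` (extended by the same
formula outside `Δ`). -/
def Tmap (x : LaurentSeries Fq) : LaurentSeries Fq :=
  if x = 0 then 0 else x⁻¹ - intPart Fq x⁻¹

/-- The natural interpretation of a polynomial `P(X) = ∑ a_i X^i` as a Laurent
series in `X⁻¹` (coefficient `a_i` at index `-i`). -/
def polyToLS (P : Polynomial Fq) : LaurentSeries Fq :=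
  ∑ i ∈ P.support, HahnSeries.single (-(i : ℤ)) (P.coeff i)

/-- The inverse correspondence (junk outside the range of `polyToLS`). -/
def lsToPoly : LaurentSeries Fq → Polynomial Fq := Function.invFun (polyToLS Fq)

/-- The digit `A_{n+1}(x) = [1 / T^n(x)]`, read off as a polynomial in `X`.
So `digit Fq n x` is the `(n+1)`-st continued fraction digit of `x`. -/
def digit (n : ℕ) (x : LaurentSeries Fq) : Polynomial Fq :=
  lsToPoly Fq (intPart Fq ((Tmap Fq)^[n] x)⁻¹)

/-- The set of rational points: the image of `𝔽_q(X)` in `𝔽_q((X⁻¹))`. -/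
def ratSet : Set (LaurentSeries Fq) := Set.range ((↑) : RatFunc Fq → LaurentSeries Fq)

/-- `𝔽_q^1[X]`, the set of polynomials of degree at least one. -/
def poly1 : Set (Polynomial Fq) := {A | 1 ≤ A.natDegree}

/-- The set `E` of points of `Δ ∖ 𝔽_q(X)` with pairwise distinct digits. -/
def Eset : Set (Delta Fq) :=
  {x | x.val ∉ ratSet Fq ∧ ∀ m n : ℕ, m ≠ n → digit Fq m x.val ≠ digit Fq n x.val}

/-- `Q_N(S)`, the elements of `S` of degree at most `N`. -/
def QN (N : ℕ) (S : Set (Polynomial Fq)) : Set (Polynomial Fq) :=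
  {A ∈ S | A.natDegree ≤ N}

/-- The relative upper density `d̄_q(U|S)`. -/
def relDensQ (U S : Set (Polynomial Fq)) : ℝ :=
  Filter.limsup (fun N : ℕ => ((QN Fq N U).ncard : ℝ) / ((QN Fq N S).ncard)) Filter.atTop

/-- `d̄_q(U) := d̄_q(U | 𝔽_q^1[X])`. -/
def densQ (U : Set (Polynomial Fq)) : ℝ := relDensQ Fq U (poly1 Fq)

/-- The relative upper density `d̄(B|G)` for sets of natural numbers. -/
def relDensN (B G : Set ℕ) : ℝ :=
  Filter.limsup (fun N : ℕ => ((B ∩ Set.Icc 1 N).ncard : ℝ) / ((G ∩ Set.Icc 1 N).ncard))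
    Filter.atTop

/-- The upper density `d̄(B) = d̄(B|ℕ)`. -/
def densN (B : Set ℕ) : ℝ :=
  Filter.limsup (fun N : ℕ => ((B ∩ Set.Icc 1 N).ncard : ℝ) / (N : ℝ)) Filter.atTop

/-- `deg S`, the set of degrees of elements of `S`. -/
def degSet (S : Set (Polynomial Fq)) : Set ℕ := Polynomial.natDegree '' S

/-- `S` has growth density with exponent `α`. -/
def HasGrowthDensity (S : Set (Polynomial Fq)) (α : ℝ) : Prop :=
  ∃ γ₁ > (0 : ℝ), ∃ γ₂ > (0 : ℝ), ∃ β ≥ (0 : ℝ), ∀ᶠ N : ℕ in Filter.atTop,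
    γ₁ * (Fintype.card Fq : ℝ) ^ ((N : ℝ) / α) / (N : ℝ) ^ β ≤ ((QN Fq N S).ncard : ℝ) ∧
    ((QN Fq N S).ncard : ℝ) ≤ γ₂ * (Fintype.card Fq : ℝ) ^ ((N : ℝ) / α) / (N : ℝ) ^ β


/-- The fundamental cylinder `I(A_1, …, A_n)` (here `A : Fin n → _`, with `A i`
playing the role of `A_{i+1}`): the set of `x ∈ Δ` whose first `n` digits are
defined and equal to the prescribed ones. -/
def cylinder (n : ℕ) (A : Fin n → Polynomial Fq) : Set (Delta Fq) :=
  {x | ∀ i : Fin n, (Tmap Fq)^[(i : ℕ)] x.val ≠ 0 ∧ digit Fq i x.val = A i}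

/-- The convergence exponent `τ(S) = inf {s ≥ 0 : ∑_{A ∈ S} (q^{-2 deg A})^s < ∞}`. -/
def convExp (S : Set (Polynomial Fq)) : ℝ :=
  sInf {s : ℝ | 0 ≤ s ∧ Summable (fun A : S =>
    ((Fintype.card Fq : ℝ) ^ (-2 * ((A : Polynomial Fq).natDegree : ℤ))) ^ s)}

/-- The set `E` together with the digit restriction and growth condition defining a
seed set: `R_t(K) = {x ∈ E : A_n(x) ∈ K, (2n)^t ≤ deg A_n(x) < (2n+1)^t for all n ≥ 1}`.
(Recall `digit Fq n x` is `A_{n+1}(x)`.) -/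
def seedSet (t : ℕ) (K : Set (Polynomial Fq)) : Set (Delta Fq) :=
  {x | x ∈ Eset Fq ∧ ∀ n : ℕ,
    digit Fq n x.val ∈ K ∧
    (2 * (n + 1)) ^ t ≤ (digit Fq n x.val).natDegree ∧
    (digit Fq n x.val).natDegree < (2 * (n + 1) + 1) ^ t}

/-- The set `𝓘_q` of irreducible polynomials of positive degree. -/
def irreds : Set (Polynomial Fq) := {P ∈ poly1 Fq | Irreducible P}

/-- `f` is Hölder continuous with exponent `γ` on `F`. -/
def HolderOnDelta (F : Set (Delta Fq)) (f : Delta Fq → Delta Fq) (γ : ℝ) : Prop :=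
  ∃ C > (0 : ℝ), ∀ x ∈ F, ∀ y ∈ F,
    qnorm Fq ((f x).val - (f y).val) ≤ C * qnorm Fq (x.val - y.val) ^ γ

/-- `f` is almost Lipschitz on `F`: Hölder continuous with every exponent `γ ∈ (0,1)`. -/
def AlmostLipschitzOn (F : Set (Delta Fq)) (f : Delta Fq → Delta Fq) : Prop :=
  ∀ γ : ℝ, 0 < γ → γ < 1 → HolderOnDelta Fq F f γ

/-- Insertion of the blocks `W_k` (given as lists, sorted by degree) into the digit
sequence `a` (where `a n` is the `(n+1)`-st digit), each block `W_k` being inserted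
immediately after the digit with (1-based) index `M k`. -/
def insertSeq (M : ℕ → ℕ) (W : ℕ → List (Polynomial Fq)) (a : ℕ → Polynomial Fq)
    (n : ℕ) : Polynomial Fq :=
  let c : ℕ → ℕ := fun k => M k + ∑ j ∈ Finset.range k, (W (j + 1)).length
  let k := Nat.findGreatest (fun j => c j ≤ n) n
  if n - c k < M (k + 1) - M k then a (M k + (n - c k))
  else (W (k + 1)).getD (n - c k - (M (k + 1) - M k)) 0

/-- The function `μ : [1,∞) → ℕ`, `μ(x) = k` for `x ∈ [k!, (k+1)!)`. -/
def muFn (x : ℝ) : ℕ := sSup {k : ℕ | (k.factorial : ℝ) ≤ x}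

/-- The set `P = ⋃_{k ≥ 2} {k! + ik : i = 0, …, k! - 1}`. -/
def Pset : Set ℕ :=
  ⋃ k ∈ {k : ℕ | 2 ≤ k}, {m | ∃ i < k.factorial, m = k.factorial + i * k}

section Helpers
variable {F : Type} [Field F] [Fintype F]

lemma finite_natDegree_le (N : ℕ) : {p : Polynomial F | p.natDegree ≤ N}.Finite := by
  have h : Set.InjOn (fun p : Polynomial F => fun i : Fin (N + 1) => p.coeff i)
      {p : Polynomial F | p.natDegree ≤ N} := by
    intro p hp q hq h
    ext i
    by_cases hi : i ≤ N
    · have := congrFun h ⟨i, Nat.lt_succ_of_le hi⟩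
      simpa using this
    · rw [Polynomial.coeff_eq_zero_of_natDegree_lt (lt_of_le_of_lt hp (by omega)),
        Polynomial.coeff_eq_zero_of_natDegree_lt (lt_of_le_of_lt hq (by omega))]
  exact Set.Finite.of_finite_image (Set.toFinite _) h

lemma QN_finite (N : ℕ) (S : Set (Polynomial F)) : (QN F N S).Finite :=
  (finite_natDegree_le N).subset (fun _ h => h.2)

lemma degset_eq_Iio (S : Set (Polynomial F)) (A : ℕ → Polynomial F)
    (hAinj : Function.Injective A) (hArange : Set.range A = S)
    (hAmono : Monotone fun n : ℕ => (A n).natDegree) (N : ℕ) :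
    {n : ℕ | (A n).natDegree ≤ N} = Set.Iio ((QN F N S).ncard) := by
  have hpre : {n : ℕ | (A n).natDegree ≤ N} = A ⁻¹' (QN F N S) := by
    ext n
    simp only [Set.mem_setOf_eq, Set.mem_preimage, QN, Set.mem_setOf_eq]
    exact ⟨fun h => ⟨hArange ▸ Set.mem_range_self n, h⟩, fun h => h.2⟩
  have hfin : {n : ℕ | (A n).natDegree ≤ N}.Finite := by
    rw [hpre]
    exact Set.Finite.preimage hAinj.injOn (QN_finite N S)
  have himg : A '' {n : ℕ | (A n).natDegree ≤ N} = QN F N S := by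
    rw [hpre]
    apply Set.image_preimage_eq_of_subset
    rw [hArange]; exact fun _ h => h.1
  have hcard : {n : ℕ | (A n).natDegree ≤ N}.ncard = (QN F N S).ncard := by
    rw [← himg, Set.ncard_image_of_injective _ hAinj]
  have hdc : ∀ m n : ℕ, m ≤ n → n ∈ {n : ℕ | (A n).natDegree ≤ N} →
      m ∈ {n : ℕ | (A n).natDegree ≤ N} := fun m n hmn hn => le_trans (hAmono hmn) hn
  ext m
  simp only [Set.mem_Iio, ← hcard]
  constructor
  · intro hm
    have hsub : Set.Iic m ⊆ {n : ℕ | (A n).natDegree ≤ N} := fun j hj => hdc j m hj hm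
    have hle := Set.ncard_le_ncard hsub hfin
    have hIic : (Set.Iic m).ncard = m + 1 := by
      rw [← Finset.coe_Iic, Set.ncard_coe_finset, Nat.card_Iic]
    omega
  · intro hm
    by_contra hmem
    have hsub : {n : ℕ | (A n).natDegree ≤ N} ⊆ Set.Iio m := by
      intro j hj
      simp only [Set.mem_Iio]
      by_contra hj'
      exact hmem (hdc m j (not_lt.mp hj') hj)
    have hle := Set.ncard_le_ncard hsub (Set.finite_Iio m)
    have hIio : (Set.Iio m).ncard = m := by
      rw [← Finset.coe_Iio, Set.ncard_coe_finset, Nat.card_Iio]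
    omega


lemma cnt_eq (S : Set (Polynomial F)) (A : ℕ → Polynomial F)
    (hAinj : Function.Injective A) (hArange : Set.range A = S)
    (hAmono : Monotone fun n : ℕ => (A n).natDegree)
    (Sstar : Set (Polynomial F)) (hSstar : Sstar ⊆ S) (N : ℕ) :
    {n : ℕ | n < (QN F N S).ncard ∧ A n ∈ Sstar}.ncard
      = {B ∈ Sstar | B.natDegree ≤ N}.ncard := by
  have h1 : {n : ℕ | n < (QN F N S).ncard ∧ A n ∈ Sstar}
      = A ⁻¹' {B ∈ Sstar | B.natDegree ≤ N} := by
    ext n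
    have h2 := Set.ext_iff.mp (degset_eq_Iio S A hAinj hArange hAmono N) n
    simp only [Set.mem_setOf_eq, Set.mem_Iio] at h2
    simp only [Set.mem_setOf_eq, Set.mem_preimage]
    tauto
  have hsub : {B ∈ Sstar | B.natDegree ≤ N} ⊆ Set.range A := by
    rw [hArange]; exact fun B hB => hSstar hB.1
  rw [h1, ← Set.ncard_image_of_injective _ hAinj,
    Set.image_preimage_eq_of_subset hsub]

lemma window_card (Sstar : Set (Polynomial F)) (L M : ℕ) (hL : 1 ≤ L) (hLM : L ≤ M) :
    {B ∈ Sstar | B.natDegree ≤ M - 1}.ncard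
      = {B ∈ Sstar | B.natDegree ≤ L - 1}.ncard
        + {B ∈ Sstar | L ≤ B.natDegree ∧ B.natDegree < M}.ncard := by
  have hfin1 : {B ∈ Sstar | B.natDegree ≤ L - 1}.Finite :=
    (finite_natDegree_le (L-1)).subset (fun _ h => h.2)
  have hfin2 : {B ∈ Sstar | L ≤ B.natDegree ∧ B.natDegree < M}.Finite :=
    (finite_natDegree_le M).subset (fun _ h => le_of_lt h.2.2)
  rw [← Set.ncard_union_eq (by
      rw [Set.disjoint_left]
      rintro B ⟨_, h1⟩ ⟨_, h2, _⟩
      omega) hfin1 hfin2]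
  congr 1
  ext B
  simp only [Set.mem_setOf_eq, Set.mem_union]
  constructor
  · rintro ⟨hB, hd⟩
    by_cases h : B.natDegree ≤ L - 1
    · exact Or.inl ⟨hB, h⟩
    · exact Or.inr ⟨hB, by omega, by omega⟩
  · rintro (⟨hB, hd⟩ | ⟨hB, h1, h2⟩) <;> exact ⟨by assumption, by omega⟩

lemma two_pow_le_factorial_succ : ∀ k : ℕ, 2 ^ k ≤ (k + 1).factorial := by
  intro k
  induction k with
  | zero => simp
  | succ k ih =>
    rw [pow_succ, Nat.factorial_succ]
    calc 2 ^ k * 2 ≤ (k+1).factorial * 2 := by omega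
    _ ≤ (k + 2) * (k + 1).factorial := by nlinarith [Nat.one_le_iff_ne_zero.2 (Nat.factorial_ne_zero (k+1))]

lemma muFn_bddAbove {x : ℝ} : BddAbove {k : ℕ | (k.factorial : ℝ) ≤ x} := by
  obtain ⟨m, hm⟩ := exists_nat_ge x
  refine ⟨m, fun k hk => ?_⟩
  simp only [Set.mem_setOf_eq] at hk
  by_contra h
  push_neg at h
  have h1 : (m : ℝ) < k.factorial := by
    exact_mod_cast lt_of_lt_of_le (Nat.lt_of_lt_of_le h (Nat.self_le_factorial k) : m < k.factorial) le_rfl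
  linarith

lemma one_le_muFn {T : ℕ} (hT : 1 ≤ T) : 1 ≤ muFn T := by
  apply le_csSup muFn_bddAbove
  simp only [Set.mem_setOf_eq, Nat.factorial_one]
  exact_mod_cast hT

lemma two_pow_pred_le_factorial (k : ℕ) : 2 ^ (k - 1) ≤ k.factorial := by
  rcases k with _ | m
  · simp
  · simpa using two_pow_le_factorial_succ m

lemma muFn_le_logb {T : ℕ} (hT : 1 ≤ T) : (muFn T : ℝ) ≤ Real.logb 2 T + 1 := by
  have hmem : (muFn T).factorial ≤ T := by
    have h0 : muFn (T:ℝ) ∈ {k : ℕ | (k.factorial : ℝ) ≤ (T : ℝ)} :=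
      Nat.sSup_mem ⟨1, by simp only [Set.mem_setOf_eq, Nat.factorial_one]; exact_mod_cast hT⟩
        muFn_bddAbove
    simp only [Set.mem_setOf_eq] at h0
    exact_mod_cast h0
  have hk1 : 1 ≤ muFn T := one_le_muFn hT
  have h2 : (2 : ℕ) ^ (muFn T - 1) ≤ T := le_trans (two_pow_pred_le_factorial _) hmem
  have h3 : ((muFn T : ℝ) - 1) ≤ Real.logb 2 T := by
    rw [Real.le_logb_iff_rpow_le one_lt_two (by exact_mod_cast hT)]
    calc (2:ℝ) ^ ((muFn T : ℝ) - 1) = (2:ℝ) ^ ((muFn T - 1 : ℕ) : ℝ) := by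
          congr 1
          push_cast [Nat.cast_sub hk1]
          ring
      _ ≤ (T : ℝ) := by rw [Real.rpow_natCast]; exact_mod_cast h2
  linarith


lemma sq_le_two_pow : ∀ t : ℕ, 4 ≤ t → t * t ≤ 2 ^ t := by
  intro t
  induction t with
  | zero => omega
  | succ t ih =>
    intro ht
    rcases Nat.lt_or_ge t 4 with h | h
    · interval_cases t <;> omega
    · have h1 := ih h
      have h2 : 2 * t + 1 ≤ t * t := by nlinarith
      calc (t+1) * (t+1) = t * t + (2*t+1) := by ring
        _ ≤ 2 ^ t + 2 ^ t := by omega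
        _ = 2 ^ (t+1) := by ring

lemma gap_lemma (n t : ℕ) (ht : 1 ≤ t) :
    (2*n) ^ t + 2 ^ (t-1) * n ^ (t-1) ≤ (2*n+1) ^ t := by
  obtain ⟨s, rfl⟩ : ∃ s, t = s + 1 := ⟨t - 1, by omega⟩
  have h1 : (2*n) ^ s ≤ (2*n+1) ^ s := Nat.pow_le_pow_left (by omega) s
  calc (2*n) ^ (s+1) + 2 ^ (s+1-1) * n ^ (s+1-1)
      = (2*n) ^ s * (2*n) + (2*n) ^ s := by
        rw [pow_succ, Nat.add_sub_cancel, mul_pow]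
    _ = (2*n) ^ s * (2*n+1) := by ring
    _ ≤ (2*n+1) ^ s * (2*n+1) := Nat.mul_le_mul_right _ h1
    _ = (2*n+1) ^ (s+1) := (pow_succ _ _).symm

lemma linear_le_two_pow (a b s : ℝ) (ha : 0 ≤ a) (hb : 0 ≤ b) (hs : 0 < s) :
    ∀ᶠ t : ℕ in Filter.atTop, a * t + b ≤ (2:ℝ) ^ (t-1) * s := by
  set c : ℝ := (a + b) / s with hc
  have hc0 : 0 ≤ c := div_nonneg (by linarith) hs.le
  refine Filter.eventually_atTop.2 ⟨max 4 (Nat.ceil (2 * c)), fun t ht => ?_⟩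
  have ht4 : 4 ≤ t := le_trans (le_max_left _ _) ht
  have htc : 2 * c ≤ (t : ℝ) := le_trans (Nat.le_ceil _) (by exact_mod_cast le_trans (le_max_right _ _) ht)
  have ht1 : (1:ℝ) ≤ (t:ℝ) := by exact_mod_cast le_trans (by norm_num) ht4
  have h1 : a * t + b ≤ (a + b) * t := by nlinarith
  have h2 : c * t ≤ (t:ℝ) * t / 2 := by nlinarith
  have h3 : (t:ℝ) * t ≤ (2:ℝ) ^ t := by
    exact_mod_cast sq_le_two_pow t ht4
  have h4 : (2:ℝ) ^ t = 2 * (2:ℝ) ^ (t-1) := by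
    rw [← pow_succ']
    congr 1
    omega
  have h5 : (a + b) * t = c * t * s := by
    field_simp [hc]
    rw [hc, div_mul_cancel₀ _ hs.ne']
  calc a * t + b ≤ c * t * s := by rw [← h5]; exact h1
    _ ≤ ((t:ℝ) * t / 2) * s := by nlinarith
    _ ≤ ((2:ℝ)^t / 2) * s := by nlinarith
    _ = (2:ℝ) ^ (t-1) * s := by rw [h4]; ring

lemma log_le_self_pow {n t : ℕ} (hn : 1 ≤ n) (ht : 2 ≤ t) :
    Real.log n ≤ ((n : ℝ)) ^ (t - 1) := by
  have h0 : (1:ℝ) ≤ (n:ℝ) := by exact_mod_cast hn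
  have h1 : Real.log n ≤ (n:ℝ) - 1 := Real.log_le_sub_one_of_pos (by linarith)
  have h2 : (n:ℝ) ≤ (n:ℝ) ^ (t-1) := by
    calc (n:ℝ) = (n:ℝ) ^ 1 := (pow_one _).symm
      _ ≤ (n:ℝ) ^ (t-1) := pow_le_pow_right₀ h0 (by omega)
  linarith

lemma keyF (qR α K₀ β : ℝ) (t n : ℕ) (hq : 1 < qR) (hα : 1 ≤ α) (hK : 0 < K₀) (hβ : 0 ≤ β)
    (ht : 2 ≤ t) (hn : 1 ≤ n)
    (hE : max (Real.log K₀) 0 + 3 * ((t:ℝ) * (β+1)) ≤ (2:ℝ) ^ (t-1) * Real.log qR / α) :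
    K₀ * (3:ℝ) ^ ((t:ℝ)*(β+1)) * (n:ℝ) ^ ((t:ℝ)*(β+1))
      ≤ qR ^ (((2 ^ (t-1) * n ^ (t-1) : ℕ) : ℝ) / α) := by
  set ρ : ℝ := (t:ℝ) * (β+1) with hρ
  have hρ0 : 0 ≤ ρ := by positivity
  have hn0 : (0:ℝ) < n := by exact_mod_cast hn
  have hα0 : (0:ℝ) < α := by linarith
  have hq0 : (0:ℝ) < qR := by linarith
  have hlq : 0 < Real.log qR := Real.log_pos hq
  have hL : 0 < K₀ * (3:ℝ) ^ ρ * (n:ℝ) ^ ρ := by positivity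
  have hR : (0:ℝ) < qR ^ (((2 ^ (t-1) * n ^ (t-1) : ℕ) : ℝ) / α) := Real.rpow_pos_of_pos hq0 _
  rw [← Real.log_le_log_iff hL hR]
  have hm1 : (1:ℝ) ≤ (n:ℝ) ^ (t-1) := one_le_pow₀ (by exact_mod_cast hn)
  have hlog3 : Real.log 3 ≤ 2 := by
    have := Real.log_le_sub_one_of_pos (by norm_num : (0:ℝ) < 3)
    linarith
  have hlogn : Real.log n ≤ (n:ℝ) ^ (t-1) := log_le_self_pow hn ht
  have hLlog : Real.log (K₀ * (3:ℝ) ^ ρ * (n:ℝ) ^ ρ)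
      = Real.log K₀ + ρ * Real.log 3 + ρ * Real.log n := by
    rw [Real.log_mul (by positivity) (by positivity), Real.log_mul (by positivity) (by positivity),
      Real.log_rpow (by norm_num), Real.log_rpow hn0]
  have hRlog : Real.log (qR ^ (((2 ^ (t-1) * n ^ (t-1) : ℕ) : ℝ) / α))
      = ((2:ℝ) ^ (t-1) * (n:ℝ) ^ (t-1) / α) * Real.log qR := by
    rw [Real.log_rpow hq0]
    push_cast
    ring
  rw [hLlog, hRlog]
  have hmaxK : Real.log K₀ ≤ max (Real.log K₀) 0 := le_max_left _ _
  have hmax0 : 0 ≤ max (Real.log K₀) 0 := le_max_right _ _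
  calc Real.log K₀ + ρ * Real.log 3 + ρ * Real.log n
      ≤ max (Real.log K₀) 0 + ρ * 2 + ρ * (n:ℝ)^(t-1) := by
        have := mul_le_mul_of_nonneg_left hlog3 hρ0
        have := mul_le_mul_of_nonneg_left hlogn hρ0
        linarith
    _ ≤ (max (Real.log K₀) 0 + 3 * ρ) * (n:ℝ)^(t-1) := by nlinarith
    _ ≤ ((2:ℝ) ^ (t-1) * Real.log qR / α) * (n:ℝ)^(t-1) := by
        apply mul_le_mul_of_nonneg_right hE (by positivity)
    _ = ((2:ℝ) ^ (t-1) * (n:ℝ) ^ (t-1) / α) * Real.log qR := by ring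

lemma expPoly (qR α C β : ℝ) (hq : 1 < qR) (hα : 1 ≤ α) (hC : 0 < C) (hβ : 0 ≤ β) :
    ∀ᶠ N : ℕ in Filter.atTop, C * (N:ℝ) ^ β ≤ qR ^ ((N:ℝ)/α) := by
  have hα0 : (0:ℝ) < α := by linarith
  have hq0 : (0:ℝ) < qR := by linarith
  set s : ℝ := Real.log qR / α with hs
  have hs0 : 0 < s := div_pos (Real.log_pos hq) hα0
  refine Filter.eventually_atTop.2
    ⟨max 1 (max (Nat.ceil ((4*β/s)^2)) (Nat.ceil (2 * max (Real.log C) 0 / s))), fun N hN => ?_⟩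
  have hN1 : 1 ≤ N := le_trans (le_max_left _ _) hN
  have hNr : (1:ℝ) ≤ (N:ℝ) := by exact_mod_cast hN1
  have hN2 : (4*β/s)^2 ≤ (N:ℝ) := by
    refine le_trans (Nat.le_ceil _) ?_
    exact_mod_cast le_trans (le_trans (le_max_left _ _) (le_max_right _ _)) hN
  have hN3 : 2 * max (Real.log C) 0 / s ≤ (N:ℝ) := by
    refine le_trans (Nat.le_ceil _) ?_
    exact_mod_cast le_trans (le_trans (le_max_right _ _) (le_max_right _ _)) hN
  have hL : (0:ℝ) < C * (N:ℝ) ^ β := by positivity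
  rw [← Real.log_le_log_iff hL (Real.rpow_pos_of_pos hq0 _), Real.log_mul (ne_of_gt hC)
    (by positivity), Real.log_rpow (by linarith), Real.log_rpow hq0]
  -- goal : log C + β * log N ≤ (N/α) * log qR = s * N
  have hgoal : (N:ℝ)/α * Real.log qR = s * N := by rw [hs]; ring
  rw [hgoal]
  have hsqrt : Real.log (N:ℝ) ≤ 2 * Real.sqrt N := by
    have h1 : Real.log (N:ℝ) = 2 * Real.log (Real.sqrt N) := by
      rw [Real.log_sqrt (by positivity)]; ring
    have h2 : Real.log (Real.sqrt N) ≤ Real.sqrt N - 1 :=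
      Real.log_le_sub_one_of_pos (Real.sqrt_pos.2 (by linarith))
    linarith
  have hsq : Real.sqrt N * Real.sqrt N = (N:ℝ) := Real.mul_self_sqrt (by positivity)
  have hs2 : 4*β/s ≤ Real.sqrt N := by
    have := Real.sqrt_le_sqrt hN2
    rwa [Real.sqrt_sq (by positivity)] at this
  have hb : β * Real.log N ≤ s/2 * N := by
    have h1 : β * Real.log N ≤ 2 * β * Real.sqrt N := by nlinarith [Real.sqrt_nonneg (N:ℝ)]
    have h2 : 2 * β * Real.sqrt N ≤ s/2 * N := by
      have h3 : 4*β ≤ s * Real.sqrt N := by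
        have := mul_le_mul_of_nonneg_left hs2 hs0.le
        rw [mul_div_assoc] at this
        calc 4*β = s * (4*β/s) := by field_simp
          _ ≤ s * Real.sqrt N := by nlinarith [Real.sqrt_nonneg (N:ℝ)]
      nlinarith [Real.sqrt_nonneg (N:ℝ)]
    linarith
  have hc : Real.log C ≤ s/2 * N := by
    have h1 : Real.log C ≤ max (Real.log C) 0 := le_max_left _ _
    have h2 : max (Real.log C) 0 ≤ s/2 * N := by
      have := mul_le_mul_of_nonneg_left hN3 (by linarith : (0:ℝ) ≤ s/2)
      calc max (Real.log C) 0 = s/2 * (2 * max (Real.log C) 0 / s) := by field_simp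
        _ ≤ s/2 * N := by nlinarith [le_max_right (Real.log C) (0:ℝ)]
    linarith
  linarith



end Helpers

set_option maxHeartbeats 2000000 in
/-- Lower bound on the cardinality of the degree windows
`𝒞_n = {A ∈ S_* : (2n)^t ≤ deg A < (2n+1)^t}`. -/
theorem card_window_lower_bound (Fq : Type) [Field Fq] [Fintype Fq]
    (S : Set (Polynomial Fq)) (hS : S ⊆ poly1 Fq)
    (α : ℝ) (hα : 1 ≤ α) (hSgd : HasGrowthDensity Fq S α)
    (A : ℕ → Polynomial Fq) (hAinj : Function.Injective A) (hArange : Set.range A = S)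
    (hAmono : Monotone fun n : ℕ => (A n).natDegree)
    (Sstar : Set (Polynomial Fq)) (hSstar : Sstar ⊆ S)
    (hcount : ∀ᶠ T : ℕ in Filter.atTop,
      1 / (2 * (muFn T : ℝ)) ≤ ({n : ℕ | n < T ∧ A n ∈ Sstar}.ncard : ℝ) / (T : ℝ) ∧
      ({n : ℕ | n < T ∧ A n ∈ Sstar}.ncard : ℝ) / (T : ℝ) ≤ 3 / (muFn T : ℝ)) :
    ∃ t : ℕ, 3 ≤ t ∧ ∃ c₀ > (0 : ℝ), ∃ ρ > (0 : ℝ), ∀ n : ℕ, 1 ≤ n →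
      c₀ * (Fintype.card Fq : ℝ) ^ ((((2 * n + 1) ^ t : ℕ) : ℝ) / α) / (n : ℝ) ^ ρ
        ≤ (({B ∈ Sstar | (2 * n) ^ t ≤ B.natDegree ∧ B.natDegree < (2 * n + 1) ^ t}).ncard : ℝ) := by
  obtain ⟨γ₁, hγ₁, γ₂, hγ₂, β, hβ, hgd⟩ := hSgd
  rw [Filter.eventually_atTop] at hgd hcount
  obtain ⟨Ngd, hgd⟩ := hgd
  obtain ⟨Tc, hcount⟩ := hcount
  set qR : ℝ := (Fintype.card Fq : ℝ) with hqR
  have hq : (1:ℝ) < qR := by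
    rw [hqR]
    exact_mod_cast (Fintype.one_lt_card : 1 < Fintype.card Fq)
  have hq0 : (0:ℝ) < qR := by linarith
  have hα0 : (0:ℝ) < α := by linarith
  have hlq : 0 < Real.log qR := Real.log_pos hq
  set C₁ : ℝ := 1 + |Real.logb 2 γ₂| + Real.logb 2 qR with hC₁def
  have hC₁ : 0 < C₁ := by
    have h1 : 0 < Real.logb 2 qR := Real.logb_pos one_lt_two hq
    have h2 : 0 ≤ |Real.logb 2 γ₂| := abs_nonneg _
    simp only [hC₁def]; linarith
  set K₀ : ℝ := 4 * γ₂ * C₁ * qR ^ ((1:ℝ)/α) / γ₁ with hK₀def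
  have hK₀ : 0 < K₀ := by
    have := Real.rpow_pos_of_pos hq0 ((1:ℝ)/α)
    simp only [hK₀def]; positivity
  -- threshold from expPoly
  obtain ⟨Nc, hNc⟩ := Filter.eventually_atTop.1
    (expPoly qR α (((Tc:ℝ)+1)/γ₁) β hq hα (by positivity) hβ)
  -- choose t
  obtain ⟨t₁, ht₁⟩ := Filter.eventually_atTop.1
    (linear_le_two_pow (3*(β+1)) (max (Real.log K₀) 0) (Real.log qR / α)
      (by linarith) (le_max_right _ _) (div_pos hlq hα0))
  set t : ℕ := max (max 3 t₁) (max Ngd Nc) with htdef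
  have ht3 : 3 ≤ t := le_trans (le_max_left _ _) (le_max_left _ _)
  have ht2 : 2 ≤ t := by omega
  have htt₁ : t₁ ≤ t := le_trans (le_max_right _ _) (le_max_left _ _)
  have htNgd : Ngd ≤ t := le_trans (le_max_left _ _) (le_max_right _ _)
  have htNc : Nc ≤ t := le_trans (le_max_right _ _) (le_max_right _ _)
  have hE : max (Real.log K₀) 0 + 3 * ((t:ℝ) * (β+1)) ≤ (2:ℝ) ^ (t-1) * Real.log qR / α := by
    have h := ht₁ t htt₁
    have e : (2:ℝ)^(t-1) * Real.log qR / α = (2:ℝ)^(t-1) * (Real.log qR / α) := by ring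
    rw [e]
    linarith
  set ρ : ℝ := (t:ℝ) * (β+1) with hρdef
  have hρpos : 0 < ρ := by
    have h0t : (0:ℝ) < (t:ℝ) := by exact_mod_cast (by omega : 0 < t)
    simp only [hρdef]
    exact mul_pos h0t (by linarith)
  set c₀ : ℝ := γ₁ * qR ^ (-(1:ℝ)/α) / (4 * C₁ * (3:ℝ) ^ ρ) with hc₀def
  have h3ρ : (0:ℝ) < (3:ℝ) ^ ρ := Real.rpow_pos_of_pos (by norm_num) _
  have hc₀ : 0 < c₀ := by
    have := Real.rpow_pos_of_pos hq0 (-(1:ℝ)/α)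
    simp only [hc₀def]; positivity
  refine ⟨t, ht3, c₀, hc₀, ρ, hρpos, fun n hn => ?_⟩
  -- notation
  set M : ℕ := (2*n+1)^t with hMdef
  set L : ℕ := (2*n)^t with hLdef
  have hLM : L ≤ M := Nat.pow_le_pow_left (by omega) t
  have h2tL : 2^t ≤ L := Nat.pow_le_pow_left (by omega) t
  have h2t : t < 2^t := Nat.lt_two_pow_self
  have hL2 : 2 ≤ L := le_trans (by have := Nat.one_lt_two_pow (n := t) (by omega); omega) h2tL
  set N₀ : ℕ := L - 1 with hN₀def
  set N₁ : ℕ := M - 1 with hN₁def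
  have hN₀1 : 1 ≤ N₀ := by omega
  have hN₀Ngd : Ngd ≤ N₀ := by omega
  have hN₁Ngd : Ngd ≤ N₁ := by omega
  have hN₁Nc : Nc ≤ N₁ := by omega
  have hN₁1 : 1 ≤ N₁ := by omega
  have hN₀r : (N₀:ℝ) = (L:ℝ) - 1 := by
    rw [hN₀def, Nat.cast_sub (by omega)]; norm_num
  have hN₁r : (N₁:ℝ) = (M:ℝ) - 1 := by
    rw [hN₁def, Nat.cast_sub (by omega)]; norm_num
  set T₁ : ℕ := (QN Fq N₁ S).ncard with hT₁def
  set T₀ : ℕ := (QN Fq N₀ S).ncard with hT₀def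
  obtain ⟨hlow1, hup1⟩ := hgd N₁ hN₁Ngd
  obtain ⟨-, hup0⟩ := hgd N₀ hN₀Ngd
  have hN₁pos : (0:ℝ) < (N₁:ℝ) := by exact_mod_cast hN₁1
  have hN₀pos : (0:ℝ) < (N₀:ℝ) := by exact_mod_cast hN₀1
  have hN₁β : (1:ℝ) ≤ (N₁:ℝ) ^ β := Real.one_le_rpow (by exact_mod_cast hN₁1) hβ
  have hN₀β : (1:ℝ) ≤ (N₀:ℝ) ^ β := Real.one_le_rpow (by exact_mod_cast hN₀1) hβ
  have hN₁βpos : (0:ℝ) < (N₁:ℝ) ^ β := by linarith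
  -- T₁ ≥ Tc + 1
  have hT₁lb : ((Tc:ℝ) + 1) ≤ (T₁:ℝ) := by
    have h1 := hNc N₁ hN₁Nc
    -- ((Tc+1)/γ₁) * N₁^β ≤ qR^(N₁/α)
    have h2 : ((Tc:ℝ)+1) ≤ γ₁ * qR ^ ((N₁:ℝ)/α) / (N₁:ℝ)^β := by
      rw [le_div_iff₀ hN₁βpos]
      have := mul_le_mul_of_nonneg_left h1 hγ₁.le
      calc ((Tc:ℝ)+1) * (N₁:ℝ)^β = γ₁ * (((Tc:ℝ)+1)/γ₁ * (N₁:ℝ)^β) := by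
            field_simp
        _ ≤ γ₁ * qR ^ ((N₁:ℝ)/α) := this
    linarith
  have hT₁Tc : Tc ≤ T₁ := by exact_mod_cast le_trans (by linarith : (Tc:ℝ) ≤ (Tc:ℝ)+1) hT₁lb
  have hT₁1 : 1 ≤ T₁ := by
    by_contra h
    push_neg at h
    interval_cases T₁
    · simp at hT₁lb
      have : (0:ℝ) ≤ (Tc:ℝ) := by positivity
      linarith
  have hT₁pos : (0:ℝ) < (T₁:ℝ) := by exact_mod_cast hT₁1
  set cnt : ℕ := {n : ℕ | n < T₁ ∧ A n ∈ Sstar}.ncard with hcntdef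
  have hcnt := (hcount T₁ hT₁Tc).1
  -- μ bound
  have hμ1 : 1 ≤ muFn T₁ := one_le_muFn hT₁1
  have hμpos : (0:ℝ) < (muFn (T₁:ℝ) : ℝ) := by exact_mod_cast hμ1
  have hT₁ub : (T₁:ℝ) ≤ γ₂ * qR ^ ((N₁:ℝ)/α) := by
    refine le_trans hup1 ?_
    rw [div_le_iff₀ hN₁βpos]
    calc γ₂ * qR ^ ((N₁:ℝ)/α) = γ₂ * qR ^ ((N₁:ℝ)/α) * 1 := (mul_one _).symm
      _ ≤ γ₂ * qR ^ ((N₁:ℝ)/α) * (N₁:ℝ)^β :=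
          mul_le_mul_of_nonneg_left hN₁β (by positivity)
  have hμub : (muFn (T₁:ℝ) : ℝ) ≤ C₁ * N₁ := by
    have h1 := muFn_le_logb hT₁1
    have h2 : Real.logb 2 (T₁:ℝ) ≤ Real.logb 2 (γ₂ * qR ^ ((N₁:ℝ)/α)) :=
      Real.logb_le_logb_of_le one_lt_two hT₁pos hT₁ub
    have h3 : Real.logb 2 (γ₂ * qR ^ ((N₁:ℝ)/α))
        = Real.logb 2 γ₂ + ((N₁:ℝ)/α) * Real.logb 2 qR := by
      rw [Real.logb, Real.logb, Real.logb, Real.log_mul (ne_of_gt hγ₂)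
        (ne_of_gt (Real.rpow_pos_of_pos hq0 _)), Real.log_rpow hq0]
      ring
    have h4 : Real.logb 2 γ₂ ≤ |Real.logb 2 γ₂| := le_abs_self _
    have h5 : (N₁:ℝ)/α ≤ (N₁:ℝ) := by
      rw [div_le_iff₀ hα0]
      exact le_mul_of_one_le_right hN₁pos.le hα
    have h6 : 0 < Real.logb 2 qR := Real.logb_pos one_lt_two hq
    have h7 : ((N₁:ℝ)/α) * Real.logb 2 qR ≤ (N₁:ℝ) * Real.logb 2 qR :=
      mul_le_mul_of_nonneg_right h5 h6.le
    have h8 : (1:ℝ) ≤ (N₁:ℝ) := by exact_mod_cast hN₁1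
    have h9 : 0 ≤ |Real.logb 2 γ₂| := abs_nonneg _
    have h10 : |Real.logb 2 γ₂| ≤ |Real.logb 2 γ₂| * N₁ := le_mul_of_one_le_right h9 h8
    rw [h3] at h2
    have h11 : Real.logb 2 qR * (N₁:ℝ) = (N₁:ℝ) * Real.logb 2 qR := by ring
    have h12 : C₁ * (N₁:ℝ) = 1 * N₁ + |Real.logb 2 γ₂| * N₁ + Real.logb 2 qR * N₁ := by
      rw [hC₁def]; ring
    rw [h12, h11]
    linarith
  have hμubpos : (0:ℝ) < C₁ * N₁ := by positivity
  -- cnt lower bound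
  have hcnt2 : (T₁:ℝ) / (2 * C₁ * N₁) ≤ (cnt:ℝ) := by
    rw [div_le_div_iff₀ (by positivity) hT₁pos] at hcnt
    rw [div_le_iff₀ (by positivity)]
    have hcnt0 : (0:ℝ) ≤ (cnt:ℝ) := by positivity
    calc (T₁:ℝ) = 1 * (T₁:ℝ) := (one_mul _).symm
      _ ≤ (cnt:ℝ) * (2 * (muFn (T₁:ℝ) : ℝ)) := hcnt
      _ ≤ (cnt:ℝ) * (2 * C₁ * N₁) := by
          have h13 : 2 * (muFn (T₁:ℝ) : ℝ) ≤ 2 * C₁ * N₁ := by linarith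
          exact mul_le_mul_of_nonneg_left h13 hcnt0
  -- set counting
  have hcnteq : (cnt:ℕ) = {B ∈ Sstar | B.natDegree ≤ N₁}.ncard :=
    cnt_eq S A hAinj hArange hAmono Sstar hSstar N₁
  have hwind := window_card Sstar L M (by omega) hLM
  have hcntP0 : ({B ∈ Sstar | B.natDegree ≤ N₀}.ncard : ℝ) ≤ (T₀:ℝ) := by
    have hsub : {B ∈ Sstar | B.natDegree ≤ N₀} ⊆ QN Fq N₀ S :=
      fun B hB => ⟨hSstar hB.1, hB.2⟩
    exact_mod_cast Set.ncard_le_ncard hsub (QN_finite N₀ S)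
  have hN₀βpos : (0:ℝ) < (N₀:ℝ) ^ β := by linarith
  have hT₀ub : (T₀:ℝ) ≤ γ₂ * qR ^ ((N₀:ℝ)/α) := by
    refine le_trans hup0 ?_
    rw [div_le_iff₀ hN₀βpos]
    calc γ₂ * qR ^ ((N₀:ℝ)/α) = γ₂ * qR ^ ((N₀:ℝ)/α) * 1 := (mul_one _).symm
      _ ≤ γ₂ * qR ^ ((N₀:ℝ)/α) * (N₀:ℝ)^β :=
          mul_le_mul_of_nonneg_left hN₀β (by positivity)
  set W : Set (Polynomial Fq) := {B ∈ Sstar | L ≤ B.natDegree ∧ B.natDegree < M} with hWdef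
  have hWcnt : (cnt:ℝ) - (T₀:ℝ) ≤ (W.ncard : ℝ) := by
    have : cnt = {B ∈ Sstar | B.natDegree ≤ N₀}.ncard + W.ncard := by
      rw [hcnteq, hN₁def, hN₀def]; exact hwind
    have h := this
    push_cast [h]
    linarith
  -- main analytic estimate
  have hXpos : (0:ℝ) < qR ^ ((M:ℝ)/α) := Real.rpow_pos_of_pos hq0 _
  have hnρ : (0:ℝ) < (n:ℝ) ^ ρ := Real.rpow_pos_of_pos (by exact_mod_cast hn) _
  -- (i)
  have hMle : (M:ℝ) ≤ ((3*n:ℕ):ℝ) ^ (t:ℕ) := by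
    have : M ≤ (3*n)^t := Nat.pow_le_pow_left (by omega) t
    exact_mod_cast this
  have hNpow : (N₁:ℝ) ^ (β+1) ≤ (3:ℝ)^ρ * (n:ℝ)^ρ := by
    have h1 : (N₁:ℝ) ≤ ((3*n:ℕ):ℝ) ^ (t:ℕ) := le_trans (by rw [hN₁r]; linarith) hMle
    have h2 : (N₁:ℝ) ^ (β+1) ≤ (((3*n:ℕ):ℝ) ^ (t:ℕ)) ^ (β+1) := by
      rw [← Real.rpow_natCast ((3*n:ℕ):ℝ) t]
      exact Real.rpow_le_rpow hN₁pos.le (by rwa [Real.rpow_natCast]) (by linarith)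
    refine le_trans h2 ?_
    rw [← Real.rpow_natCast ((3*n:ℕ):ℝ) t, ← Real.rpow_mul (by positivity)]
    have h3 : ((3*n:ℕ):ℝ) = 3 * (n:ℝ) := by push_cast; ring
    rw [h3, Real.mul_rpow (by norm_num) (by positivity)]
  have hi : 2 * c₀ * qR ^ ((M:ℝ)/α) / (n:ℝ)^ρ ≤ (T₁:ℝ) / (2 * C₁ * N₁) := by
    have hsplit : qR ^ ((N₁:ℝ)/α) = qR ^ ((M:ℝ)/α) * qR ^ (-(1:ℝ)/α) := by
      rw [← Real.rpow_add hq0]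
      congr 1
      rw [hN₁r]
      ring
    have hT₁lb2 : γ₁ * qR ^ ((N₁:ℝ)/α) / (N₁:ℝ)^β ≤ (T₁:ℝ) := hlow1
    have hkey : γ₁ * qR ^ ((N₁:ℝ)/α) / ((3:ℝ)^ρ * (n:ℝ)^ρ) / (2*C₁)
        ≤ (T₁:ℝ) / (2 * C₁ * N₁) := by
      have e1 : γ₁ * qR ^ ((N₁:ℝ)/α) / (N₁:ℝ)^β / (2*C₁*N₁)
          = γ₁ * qR ^ ((N₁:ℝ)/α) / ((N₁:ℝ)^(β+1)) / (2*C₁) := by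
        rw [Real.rpow_add_one (ne_of_gt hN₁pos)]
        field_simp
      have e2 : γ₁ * qR ^ ((N₁:ℝ)/α) / ((3:ℝ)^ρ * (n:ℝ)^ρ)
          ≤ γ₁ * qR ^ ((N₁:ℝ)/α) / ((N₁:ℝ)^(β+1)) := by
        apply div_le_div_of_nonneg_left (by positivity) (by positivity) hNpow
      calc γ₁ * qR ^ ((N₁:ℝ)/α) / ((3:ℝ)^ρ * (n:ℝ)^ρ) / (2*C₁)
          ≤ γ₁ * qR ^ ((N₁:ℝ)/α) / ((N₁:ℝ)^(β+1)) / (2*C₁) := by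
            apply div_le_div_of_nonneg_right e2 (by positivity)
        _ = γ₁ * qR ^ ((N₁:ℝ)/α) / (N₁:ℝ)^β / (2*C₁*N₁) := e1.symm
        _ ≤ (T₁:ℝ) / (2*C₁*N₁) := by
            apply div_le_div_of_nonneg_right hT₁lb2 (by positivity)
    refine le_trans (le_of_eq ?_) hkey
    rw [hsplit, hc₀def]
    field_simp
    ring
  -- (ii)
  have hii : γ₂ * qR ^ ((N₀:ℝ)/α) ≤ c₀ * qR ^ ((M:ℝ)/α) / (n:ℝ)^ρ := by
    rw [le_div_iff₀ hnρ]
    have hkf := keyF qR α K₀ β t n hq hα hK₀ hβ ht2 hn hE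
    have hgap : ((2 ^ (t-1) * n ^ (t-1) : ℕ) : ℝ) ≤ (M:ℝ) - (N₀:ℝ) := by
      have h := gap_lemma n t (by omega)
      have hcast : (L:ℝ) + ((2^(t-1)*n^(t-1) : ℕ):ℝ) ≤ (M:ℝ) := by exact_mod_cast h
      rw [hN₀r]
      linarith
    have hmono : qR ^ (((2 ^ (t-1) * n ^ (t-1) : ℕ) : ℝ)/α) ≤ qR ^ (((M:ℝ) - (N₀:ℝ))/α) :=
      Real.rpow_le_rpow_of_exponent_le hq.le (by
        exact div_le_div_of_nonneg_right hgap hα0.le)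
    have hfact : γ₂ = c₀ * K₀ * (3:ℝ)^ρ := by
      rw [hc₀def, hK₀def]
      have h1 : qR ^ (-(1:ℝ)/α) * qR ^ ((1:ℝ)/α) = 1 := by
        have e : (-(1:ℝ)/α + (1:ℝ)/α) = 0 := by ring
        rw [← Real.rpow_add hq0, e, Real.rpow_zero]
      rw [show γ₁ * qR ^ (-(1:ℝ)/α) / (4 * C₁ * (3:ℝ)^ρ) * (4 * γ₂ * C₁ * qR ^ ((1:ℝ)/α) / γ₁) * (3:ℝ)^ρ
          = γ₂ * (qR ^ (-(1:ℝ)/α) * qR ^ ((1:ℝ)/α)) * (γ₁ * γ₁⁻¹) * (C₁ * C₁⁻¹)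
            * ((3:ℝ)^ρ * ((3:ℝ)^ρ)⁻¹) * (4 * 4⁻¹) by ring,
        h1, mul_inv_cancel₀ hγ₁.ne', mul_inv_cancel₀ hC₁.ne', mul_inv_cancel₀ h3ρ.ne']
      norm_num
    have hmul : γ₂ * (n:ℝ)^ρ ≤ c₀ * qR ^ (((M:ℝ) - (N₀:ℝ))/α) := by
      calc γ₂ * (n:ℝ)^ρ = c₀ * (K₀ * (3:ℝ)^ρ * (n:ℝ)^ρ) := by rw [hfact]; ring
        _ ≤ c₀ * qR ^ (((2 ^ (t-1) * n ^ (t-1) : ℕ) : ℝ)/α) := by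
            apply mul_le_mul_of_nonneg_left (le_trans (le_of_eq (by rw [hρdef])) hkf) hc₀.le
        _ ≤ c₀ * qR ^ (((M:ℝ) - (N₀:ℝ))/α) := mul_le_mul_of_nonneg_left hmono hc₀.le
    calc γ₂ * qR ^ ((N₀:ℝ)/α) * (n:ℝ)^ρ
        = (γ₂ * (n:ℝ)^ρ) * qR ^ ((N₀:ℝ)/α) := by ring
      _ ≤ (c₀ * qR ^ (((M:ℝ) - (N₀:ℝ))/α)) * qR ^ ((N₀:ℝ)/α) := by
          apply mul_le_mul_of_nonneg_right hmul (Real.rpow_pos_of_pos hq0 _).le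
      _ = c₀ * qR ^ ((M:ℝ)/α) := by
          rw [mul_assoc, ← Real.rpow_add hq0]
          congr 2
          ring
  -- combine
  have hfinal : c₀ * qR ^ ((M:ℝ)/α) / (n:ℝ)^ρ ≤ (W.ncard : ℝ) := by
    have h1 : c₀ * qR ^ ((M:ℝ)/α) / (n:ℝ)^ρ
        = 2 * c₀ * qR ^ ((M:ℝ)/α) / (n:ℝ)^ρ - c₀ * qR ^ ((M:ℝ)/α) / (n:ℝ)^ρ := by ring
    rw [h1]
    have h2 : (T₁:ℝ)/(2*C₁*N₁) - γ₂ * qR ^ ((N₀:ℝ)/α) ≤ (cnt:ℝ) - (T₀:ℝ) := by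
      have := hcnt2
      linarith
    linarith [hWcnt]
  exact hfinal

end LaurentCF
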